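/- Let 2r ≥ n + g(d+1), n ≥ r, and let the data x_1,…,x_n ∈ ℝ^d be in general position. Then there exists a constant c > 0 depending only on x_1,…,x_n and d with the following property: for every family y_1,…,y_n ∈ ℝ^d in general position differing from x_1,…,x_n in at most n−r+g−1 indices, every configuration R over an r-element subset of {1,…,n} (for the data y_1,…,y_n) that minimizes det W_R over all such configurations satisfies v^T W_R v ≤ c·||v||² for every v ∈ ℝ^d, i.e., every eigenvalue of W_R is at most c. -/

import Mathlib

open Matrix Finset Real

/-- The sample mean of the points `x i`, `i ∈ S`; a fixed a-priori vector `dflt` if `S = ∅`. -/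
noncomputable def clusterMean {n d : ℕ} (x : Fin n → Fin d → ℝ) (dflt : Fin d → ℝ)
    (S : Finset (Fin n)) : Fin d → ℝ :=
  if S.Nonempty then (S.card : ℝ)⁻¹ • ∑ i ∈ S, x i else dflt

/-- The pooled (within-groups) SSP matrix of the configuration `C` for the data `x`:
`W = Σ_j Σ_{i ∈ C j} (x i − m_j)(x i − m_j)ᵀ`, where `m_j` is the sample mean of cluster `j`. -/
noncomputable def pooledSSP {n d g : ℕ} (x : Fin n → Fin d → ℝ) (dflt : Fin g → Fin d → ℝ)
    (C : Fin g → Finset (Fin n)) : Matrix (Fin d) (Fin d) ℝ :=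
  ∑ j, ∑ i ∈ C j, Matrix.vecMulVec (x i - clusterMean x (dflt j) (C j))
    (x i - clusterMean x (dflt j) (C j))

/-- A configuration over an `r`-element subset of `{1,…,n}`: a family of `g` pairwise
disjoint (possibly empty) clusters whose union has exactly `r` elements. -/
def IsConfig {n g : ℕ} (r : ℕ) (C : Fin g → Finset (Fin n)) : Prop :=
  (∀ j k : Fin g, j ≠ k → Disjoint (C j) (C k)) ∧ (Finset.univ.biUnion C).card = r

/-- A family of points of `ℝ^d` is in general position if any `d+1` of them are affinely
independent. -/
def InGeneralPosition {n d : ℕ} (x : Fin n → Fin d → ℝ) : Prop :=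
  ∀ s : Finset (Fin n), s.card = d + 1 → AffineIndependent ℝ (fun i : s => x (i : Fin n))

section Helpers

lemma dot_inner' {d : ℕ} (a b : EuclideanSpace ℝ (Fin d)) :
    (inner ℝ a b : ℝ) = (a : Fin d → ℝ) ⬝ᵥ (b : Fin d → ℝ) := by
  simp [PiLp.inner_apply, dotProduct, RCLike.inner_apply, mul_comm]

lemma quad_expand {d : ℕ} {A : Matrix (Fin d) (Fin d) ℝ} (hA : A.IsHermitian) (v : Fin d → ℝ) :
    ∃ w : Fin d → ℝ, (v ⬝ᵥ A *ᵥ v = ∑ i, hA.eigenvalues i * w i ^ 2) ∧ v ⬝ᵥ v = ∑ i, w i ^ 2 := by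
  classical
  let v' : EuclideanSpace ℝ (Fin d) := WithLp.toLp 2 v
  have hAT : ∀ u w : Fin d → ℝ, u ⬝ᵥ (A *ᵥ w) = (A *ᵥ u) ⬝ᵥ w := by
    intro u w
    have hT : Aᵀ = A := by
      refine Matrix.ext fun i j => ?_
      have h := congrFun (congrFun hA.eq i) j
      simpa [Matrix.conjTranspose_apply] using h
    rw [Matrix.dotProduct_mulVec, ← Matrix.mulVec_transpose, hT]
  refine ⟨fun i => (hA.eigenvectorBasis i) ⬝ᵥ v, ?_, ?_⟩
  · have h1 : (inner ℝ v' (WithLp.toLp 2 (A *ᵥ v)) : ℝ)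
        = ∑ i, (inner ℝ v' (hA.eigenvectorBasis i) : ℝ) *
          (inner ℝ (hA.eigenvectorBasis i) (WithLp.toLp 2 (A *ᵥ v)) : ℝ) :=
      (hA.eigenvectorBasis.sum_inner_mul_inner v' _).symm
    have h2 : v ⬝ᵥ (A *ᵥ v) = ∑ i, (v ⬝ᵥ (hA.eigenvectorBasis i : Fin d → ℝ)) *
        ((hA.eigenvectorBasis i : Fin d → ℝ) ⬝ᵥ (A *ᵥ v)) := by
      simpa [dot_inner'] using h1
    rw [h2]
    refine Finset.sum_congr rfl fun i _ => ?_
    rw [hAT]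
    have h := hA.mulVec_eigenvectorBasis i
    erw [h, smul_dotProduct]
    simp only [show ∀ u : EuclideanSpace ℝ (Fin d),
      (WithLp.equiv 2 (Fin d → ℝ)) u = (u : Fin d → ℝ) from fun _ => rfl]
    rw [dotProduct_comm v, smul_eq_mul]
    ring
  · have h1 : (inner ℝ v' v' : ℝ) = ∑ i, (inner ℝ v' (hA.eigenvectorBasis i) : ℝ) *
        (inner ℝ (hA.eigenvectorBasis i) v' : ℝ) :=
      (hA.eigenvectorBasis.sum_inner_mul_inner v' v').symm
    have h2 : v ⬝ᵥ v = ∑ i, (v ⬝ᵥ (hA.eigenvectorBasis i : Fin d → ℝ)) *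
        ((hA.eigenvectorBasis i : Fin d → ℝ) ⬝ᵥ v) := by
      simp only [dot_inner'] at h1
      simpa using h1
    rw [h2]
    refine Finset.sum_congr rfl fun i _ => ?_
    rw [dotProduct_comm v]
    ring

lemma eigen_basis_dot {d : ℕ} {A : Matrix (Fin d) (Fin d) ℝ} (hA : A.IsHermitian) (i : Fin d) :
    (hA.eigenvectorBasis i : Fin d → ℝ) ⬝ᵥ (hA.eigenvectorBasis i : Fin d → ℝ) = 1 := by
  have h2 : (inner ℝ (hA.eigenvectorBasis i) (hA.eigenvectorBasis i) : ℝ) = 1 := by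
    rw [real_inner_self_eq_norm_sq, hA.eigenvectorBasis.orthonormal.1 i]; norm_num
  rw [← dot_inner', h2]

lemma eigen_quad {d : ℕ} {A : Matrix (Fin d) (Fin d) ℝ} (hA : A.IsHermitian) (i : Fin d) :
    (hA.eigenvectorBasis i : Fin d → ℝ) ⬝ᵥ (A *ᵥ (hA.eigenvectorBasis i : Fin d → ℝ))
      = hA.eigenvalues i := by
  have h := hA.mulVec_eigenvectorBasis i
  erw [h]
  have h2 : ∀ c : ℝ, ∀ u w : Fin d → ℝ, u ⬝ᵥ (c • w) = c * (u ⬝ᵥ w) := by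
    intro c u w; simp [dotProduct_smul]
  erw [h2]
  erw [eigen_basis_dot hA i]
  ring

lemma eig_ge {d : ℕ} {A : Matrix (Fin d) (Fin d) ℝ} (hA : A.IsHermitian) {ε : ℝ}
    (h : ∀ v : Fin d → ℝ, ε * (v ⬝ᵥ v) ≤ v ⬝ᵥ A *ᵥ v) (i : Fin d) : ε ≤ hA.eigenvalues i := by
  have hq := h (hA.eigenvectorBasis i)
  rw [eigen_quad hA i] at hq
  rw [eigen_basis_dot hA i] at hq
  linarith

lemma eig_pos {d : ℕ} {A : Matrix (Fin d) (Fin d) ℝ} (hA : A.IsHermitian)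
    (h : ∀ v : Fin d → ℝ, v ≠ 0 → 0 < v ⬝ᵥ A *ᵥ v) (i : Fin d) : 0 < hA.eigenvalues i := by
  have hb : (hA.eigenvectorBasis i : Fin d → ℝ) ≠ 0 := by
    intro h0
    have := eigen_basis_dot hA i
    rw [h0] at this
    simp [dotProduct] at this
  have hq := h _ hb
  rwa [eigen_quad hA i] at hq

lemma sum_mulVec' {α d : ℕ} {β : Type*} (s : Finset β) (M : β → Matrix (Fin d) (Fin α) ℝ)
    (v : Fin α → ℝ) : (∑ i ∈ s, M i) *ᵥ v = ∑ i ∈ s, M i *ᵥ v := by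
  ext k
  simp only [Matrix.mulVec, dotProduct, Finset.sum_apply, Matrix.sum_apply, Finset.sum_mul]
  rw [Finset.sum_comm]

lemma dot_sum' {d : ℕ} {β : Type*} (s : Finset β) (u : β → Fin d → ℝ) (v : Fin d → ℝ) :
    v ⬝ᵥ (∑ i ∈ s, u i) = ∑ i ∈ s, v ⬝ᵥ u i := by
  simp only [dotProduct, Finset.sum_apply, Finset.mul_sum]
  rw [Finset.sum_comm]

lemma sum_dot' {d : ℕ} {β : Type*} (s : Finset β) (u : β → Fin d → ℝ) (v : Fin d → ℝ) :
    (∑ i ∈ s, u i) ⬝ᵥ v = ∑ i ∈ s, u i ⬝ᵥ v := by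
  rw [dotProduct_comm, dot_sum']
  exact Finset.sum_congr rfl fun i _ => dotProduct_comm _ _

lemma vecMulVec_quad {d : ℕ} (a v : Fin d → ℝ) :
    v ⬝ᵥ (Matrix.vecMulVec a a *ᵥ v) = (a ⬝ᵥ v) ^ 2 := by
  have h : Matrix.vecMulVec a a *ᵥ v = (a ⬝ᵥ v) • a := by
    ext k
    simp only [Matrix.mulVec, Matrix.vecMulVec_apply, dotProduct, Pi.smul_apply, smul_eq_mul,
      Finset.sum_mul]
    exact Finset.sum_congr rfl fun i _ => by ring
  rw [h]
  have h2 : ∀ c : ℝ, ∀ u w : Fin d → ℝ, u ⬝ᵥ (c • w) = c * (u ⬝ᵥ w) := by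
    intro c u w; simp [dotProduct_smul]
  rw [h2, dotProduct_comm]
  ring

lemma quadform_pooledSSP {n d g : ℕ} (y : Fin n → Fin d → ℝ) (dflt : Fin g → Fin d → ℝ)
    (C : Fin g → Finset (Fin n)) (v : Fin d → ℝ) :
    v ⬝ᵥ (pooledSSP y dflt C *ᵥ v)
      = ∑ j, ∑ i ∈ C j, ((y i - clusterMean y (dflt j) (C j)) ⬝ᵥ v) ^ 2 := by
  unfold pooledSSP
  rw [sum_mulVec', dot_sum']
  refine Finset.sum_congr rfl fun j _ => ?_
  rw [sum_mulVec', dot_sum']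
  exact Finset.sum_congr rfl fun i _ => vecMulVec_quad _ v

lemma isHermitian_pooledSSP {n d g : ℕ} (y : Fin n → Fin d → ℝ) (dflt : Fin g → Fin d → ℝ)
    (C : Fin g → Finset (Fin n)) : (pooledSSP y dflt C).IsHermitian := by
  unfold Matrix.IsHermitian pooledSSP
  rw [Matrix.conjTranspose_sum]
  refine Finset.sum_congr rfl fun j _ => ?_
  rw [Matrix.conjTranspose_sum]
  refine Finset.sum_congr rfl fun i _ => ?_
  refine Matrix.ext fun k l => ?_
  simp [Matrix.conjTranspose_apply, Matrix.vecMulVec_apply, mul_comm]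

lemma cluster_small_zero {n d : ℕ} (y : Fin n → Fin d → ℝ) (w : Fin d → ℝ)
    {S : Finset (Fin n)} (hS : S.card ≤ 1) :
    ∑ i ∈ S, Matrix.vecMulVec (y i - clusterMean y w S) (y i - clusterMean y w S) = 0 := by
  rcases S.eq_empty_or_nonempty with h | h
  · simp [h]
  · have hc : S.card = 1 := le_antisymm hS (Finset.card_pos.mpr h)
    obtain ⟨a, rfl⟩ := Finset.card_eq_one.mp hc
    have hm : clusterMean y w {a} = y a := by
      unfold clusterMean
      simp
    rw [Finset.sum_singleton, hm, sub_self]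
    refine Matrix.ext fun k l => ?_
    simp [Matrix.vecMulVec_apply]

lemma clusterMean_congr {n d : ℕ} {y x : Fin n → Fin d → ℝ} (w : Fin d → ℝ)
    {S : Finset (Fin n)} (h : ∀ i ∈ S, y i = x i) :
    clusterMean y w S = clusterMean x w S := by
  unfold clusterMean
  rw [Finset.sum_congr rfl h]

lemma least_squares {α : Type*} (s : Finset α) (a : α → ℝ) (t : ℝ) :
    ∑ i ∈ s, (a i - (s.card : ℝ)⁻¹ * ∑ j ∈ s, a j) ^ 2 ≤ ∑ i ∈ s, (a i - t) ^ 2 := by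
  rcases s.eq_empty_or_nonempty with h | h
  · simp [h]
  set m := (s.card : ℝ)⁻¹ * ∑ j ∈ s, a j with hm
  have hcard : (s.card : ℝ) ≠ 0 := by
    simp [Finset.card_ne_zero_of_mem h.choose_spec]
  have h0 : ∑ i ∈ s, (a i - m) = 0 := by
    rw [Finset.sum_sub_distrib, Finset.sum_const, nsmul_eq_mul, hm]
    field_simp
    ring
  have key : ∑ i ∈ s, (a i - t) ^ 2
      = ∑ i ∈ s, (a i - m) ^ 2 + 2 * (m - t) * (∑ i ∈ s, (a i - m)) + s.card * (m - t) ^ 2 := by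
    rw [Finset.mul_sum, ← Finset.sum_add_distrib]
    have : (s.card : ℝ) * (m - t) ^ 2 = ∑ _i ∈ s, (m - t) ^ 2 := by
      rw [Finset.sum_const, nsmul_eq_mul]
    rw [this, ← Finset.sum_add_distrib]
    refine Finset.sum_congr rfl fun i _ => ?_
    ring
  rw [key, h0]
  have h1 : 0 ≤ (s.card : ℝ) * (m - t) ^ 2 := by positivity
  linarith

lemma gp_quad_pos {n d : ℕ} (x : Fin n → Fin d → ℝ) {S : Finset (Fin n)} (hS : S.card = d + 1)
    (haff : AffineIndependent ℝ (fun i : S => x (i : Fin n)))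
    (w : Fin d → ℝ) (v : Fin d → ℝ) (hv : v ≠ 0) :
    0 < ∑ i ∈ S, ((x i - clusterMean x w S) ⬝ᵥ v) ^ 2 := by
  classical
  obtain ⟨k, hk⟩ := Function.ne_iff.mp hv
  have hd : 0 < d := k.pos
  have hvv : 0 < v ⬝ᵥ v := by
    have h1 : v ⬝ᵥ v = ∑ i, v i ^ 2 := by simp [dotProduct, sq]
    rw [h1]
    refine Finset.sum_pos' (fun i _ => sq_nonneg _) ⟨k, Finset.mem_univ _, ?_⟩
    simpa using pow_pos (abs_pos.mpr (by simpa using hk)) 2 |>.trans_le (by rw [sq_abs])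
  by_contra hle
  push_neg at hle
  have hsum0 : ∑ i ∈ S, ((x i - clusterMean x w S) ⬝ᵥ v) ^ 2 = 0 :=
    le_antisymm hle (Finset.sum_nonneg fun i _ => sq_nonneg _)
  have hz : ∀ i ∈ S, x i ⬝ᵥ v = clusterMean x w S ⬝ᵥ v := by
    intro i hi
    have := (Finset.sum_eq_zero_iff_of_nonneg (fun i _ => sq_nonneg _)).mp hsum0 i hi
    have h2 := pow_eq_zero_iff (n := 2) (by norm_num) |>.mp this
    rw [sub_dotProduct] at h2
    linarith
  let φ : (Fin d → ℝ) →ₗ[ℝ] ℝ :=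
    { toFun := fun u => u ⬝ᵥ v
      map_add' := fun a b => by simp [add_dotProduct]
      map_smul' := fun c a => by simp [smul_dotProduct] }
  have hker : vectorSpan ℝ (Set.range (fun i : S => x (i : Fin n))) ≤ LinearMap.ker φ := by
    rw [vectorSpan_def, Submodule.span_le]
    rintro z hz'
    obtain ⟨a, ha, b, hb, rfl⟩ := Set.mem_vsub.mp hz'
    obtain ⟨i, rfl⟩ := ha
    obtain ⟨j, rfl⟩ := hb
    simp only [SetLike.mem_coe, LinearMap.mem_ker]
    show (x i - x j) ⬝ᵥ v = 0
    rw [sub_dotProduct, hz i i.2, hz j j.2]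
    ring
  have hfr : Module.finrank ℝ (vectorSpan ℝ (Set.range (fun i : S => x (i : Fin n)))) = d :=
    haff.finrank_vectorSpan (by simp [Fintype.card_coe, hS])
  have hsurj : LinearMap.range φ = ⊤ := by
    rw [LinearMap.range_eq_top]
    intro c
    refine ⟨(c / (v ⬝ᵥ v)) • v, ?_⟩
    show ((c / (v ⬝ᵥ v)) • v) ⬝ᵥ v = c
    rw [smul_dotProduct, smul_eq_mul]
    field_simp
  have hrn := LinearMap.finrank_range_add_finrank_ker φ
  rw [hsurj, finrank_top] at hrn
  have hfd : Module.finrank ℝ (Fin d → ℝ) = d := Module.finrank_fin_fun ℝ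
  have hfR : Module.finrank ℝ ℝ = 1 := Module.finrank_self ℝ
  rw [hfd, hfR] at hrn
  have hmono := Submodule.finrank_mono hker
  rw [hfr] at hmono
  omega

end Helpers

/-- Theorem 4.3(b) of the paper.  Suppose `2r ≥ n + g(d+1)` and the data
are in general position.  There is a constant `c > 0`, depending only on the data and `d`,
such that for every family in general position differing from the data in at most
`n − r + g − 1` indices, the pooled SSP matrix of every TDC-optimal configuration
satisfies `vᵀ W v ≤ c‖v‖²`, i.e. all its eigenvalues are at most `c`. -/
theorem tdc_optimal_ssp_eigenvalues_bounded_above {n d g r : ℕ} (hg : 0 < g)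
    (h2r : n + g * (d + 1) ≤ 2 * r) (hn : r ≤ n)
    (x : Fin n → Fin d → ℝ) (hx : InGeneralPosition x) (dflt : Fin g → Fin d → ℝ) :
    ∃ c : ℝ, 0 < c ∧
      ∀ y : Fin n → Fin d → ℝ, InGeneralPosition y →
        (Finset.univ.filter (fun i => y i ≠ x i)).card ≤ n - r + g - 1 →
        ∀ C : Fin g → Finset (Fin n), IsConfig r C →
          (∀ P : Fin g → Finset (Fin n), IsConfig r P →
            (pooledSSP y dflt C).det ≤ (pooledSSP y dflt P).det) →
          ∀ v : Fin d → ℝ, v ⬝ᵥ (pooledSSP y dflt C *ᵥ v) ≤ c * (v ⬝ᵥ v) := by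
  classical
  rcases Nat.eq_zero_or_pos d with hd0 | hd0
  · subst hd0
    exact ⟨1, one_pos, fun y _ _ C _ _ v => by simp [dotProduct]⟩
  -- d ≥ 1
  have hgd : g ≤ g * (d + 1) := Nat.le_mul_of_pos_right g (by omega)
  have hnd : d + 1 ≤ n := by
    have h1 : d + 1 ≤ g * (d + 1) := Nat.le_mul_of_pos_left _ hg
    omega
  -- the single-cluster x-based SSP matrix of a set S
  set MS : Finset (Fin n) → Matrix (Fin d) (Fin d) ℝ :=
    fun S => pooledSSP (g := 1) x (fun _ => (0 : Fin d → ℝ)) (fun _ => S) with hMS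
  have hherm : ∀ S, (MS S).IsHermitian := fun S => isHermitian_pooledSSP _ _ _
  have hquadMS : ∀ S : Finset (Fin n), ∀ u : Fin d → ℝ,
      u ⬝ᵥ (MS S *ᵥ u) = ∑ i ∈ S, ((x i - clusterMean x 0 S) ⬝ᵥ u) ^ 2 := by
    intro S u
    rw [hMS, quadform_pooledSSP]
    simp
  have hFdne : (Finset.univ : Finset (Fin d)).Nonempty := ⟨⟨0, hd0⟩, Finset.mem_univ _⟩
  set εS : Finset (Fin n) → ℝ :=
    fun S => Finset.univ.inf' hFdne ((hherm S).eigenvalues) with hεS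
  set 𝒮 := Finset.powersetCard (d + 1) (Finset.univ : Finset (Fin n)) with h𝒮def
  have h𝒮ne : 𝒮.Nonempty := by
    obtain ⟨S, hSsub, hScard⟩ := Finset.exists_subset_card_eq (s := (Finset.univ : Finset (Fin n))) (n := d + 1)
      (by rw [Finset.card_univ, Fintype.card_fin]; exact hnd)
    exact ⟨S, Finset.mem_powersetCard.mpr ⟨hSsub, hScard⟩⟩
  set ε : ℝ := 𝒮.inf' h𝒮ne εS with hεdef
  have hεpos : 0 < ε := by
    rw [hεdef, Finset.lt_inf'_iff]
    intro S hSmem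
    have hScard : S.card = d + 1 := (Finset.mem_powersetCard.mp hSmem).2
    have haff := hx S hScard
    rw [hεS, Finset.lt_inf'_iff]
    intro i _
    refine eig_pos (hherm S) (fun v hv => ?_) i
    rw [hquadMS]
    exact gp_quad_pos x hScard haff _ v hv
  have hεSquad : ∀ S : Finset (Fin n), ∀ u : Fin d → ℝ,
      εS S * (u ⬝ᵥ u) ≤ u ⬝ᵥ (MS S *ᵥ u) := by
    intro S u
    obtain ⟨w, hw1, hw2⟩ := quad_expand (hherm S) u
    rw [hw1, hw2, Finset.mul_sum]
    refine Finset.sum_le_sum fun i _ => ?_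
    exact mul_le_mul_of_nonneg_right (Finset.inf'_le _ (Finset.mem_univ i)) (sq_nonneg _)
  -- upper bound constant
  set c0 : ℝ := Finset.univ.sup' Finset.univ_nonempty
    (fun P : Fin g → Finset (Fin n) => (pooledSSP x dflt P).det) with hc0
  refine ⟨max (c0 * (ε ^ (d - 1))⁻¹) 1, lt_of_lt_of_le one_pos (le_max_right _ _), ?_⟩
  intro y hy hdiff C hC hopt v
  set U := Finset.univ.filter (fun i => y i = x i) with hU
  have hUcard : U.card + (Finset.univ.filter (fun i => y i ≠ x i)).card = n := by
    have h := Finset.card_filter_add_card_filter_not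
      (s := (Finset.univ : Finset (Fin n))) (p := fun i => y i = x i)
    simpa [hU, Finset.card_univ] using h
  -- ################ lower bound on the quadratic form of W ################
  have hlow : ∀ u : Fin d → ℝ, ε * (u ⬝ᵥ u) ≤ u ⬝ᵥ (pooledSSP y dflt C *ᵥ u) := by
    intro u
    set R := Finset.univ.biUnion C with hR
    have hRcard : R.card = r := hC.2
    have hRsd : R \ U ⊆ Finset.univ.filter (fun i => y i ≠ x i) := by
      intro i hi
      rw [Finset.mem_sdiff] at hi
      simp only [hU, Finset.mem_filter, Finset.mem_univ, true_and] at hi ⊢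
      exact hi.2
    have hsd : (R \ U).card ≤ n - r + g - 1 := le_trans (Finset.card_le_card hRsd) hdiff
    have hinter : (R ∩ U).card + (R \ U).card = r := by
      rw [Finset.card_inter_add_card_sdiff, hRcard]
    have hRUbig : g * d + 1 ≤ (R ∩ U).card := by
      have hgd2 : g * (d + 1) = g * d + g := by ring
      omega
    have hRUsum : (R ∩ U).card ≤ ∑ j, (C j ∩ U).card := by
      have h3 : R ∩ U = Finset.univ.biUnion (fun j => C j ∩ U) := by
        ext a
        simp only [hR, Finset.mem_inter, Finset.mem_biUnion, Finset.mem_univ, true_and]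
        tauto
      rw [h3]
      exact Finset.card_biUnion_le
    have hbig : ∃ j0 : Fin g, d + 1 ≤ (C j0 ∩ U).card := by
      by_contra hno
      push_neg at hno
      have : ∑ j, (C j ∩ U).card ≤ ∑ _j : Fin g, d :=
        Finset.sum_le_sum fun j _ => by have := hno j; omega
      rw [Finset.sum_const, Finset.card_univ, Fintype.card_fin, smul_eq_mul] at this
      omega
    obtain ⟨j0, hj0⟩ := hbig
    obtain ⟨S, hSsub, hScard⟩ := Finset.exists_subset_card_eq (s := C j0 ∩ U) (n := d + 1) hj0
    have hSC : S ⊆ C j0 := hSsub.trans Finset.inter_subset_left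
    have hSU : ∀ i ∈ S, y i = x i := by
      intro i hi
      have := hSsub hi
      rw [Finset.mem_inter, hU, Finset.mem_filter] at this
      exact this.2.2
    rw [quadform_pooledSSP]
    set m := clusterMean y (dflt j0) (C j0) with hm
    have h4 : ∑ i ∈ C j0, ((y i - m) ⬝ᵥ u) ^ 2
        ≤ ∑ j, ∑ i ∈ C j, ((y i - clusterMean y (dflt j) (C j)) ⬝ᵥ u) ^ 2 :=
      Finset.single_le_sum (f := fun j => ∑ i ∈ C j,
        ((y i - clusterMean y (dflt j) (C j)) ⬝ᵥ u) ^ 2)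
        (fun j _ => Finset.sum_nonneg fun i _ => sq_nonneg _) (Finset.mem_univ j0)
    have h5 : ∑ i ∈ S, ((y i - m) ⬝ᵥ u) ^ 2 ≤ ∑ i ∈ C j0, ((y i - m) ⬝ᵥ u) ^ 2 :=
      Finset.sum_le_sum_of_subset_of_nonneg hSC fun i _ _ => sq_nonneg _
    have h6 : ∑ i ∈ S, ((y i - m) ⬝ᵥ u) ^ 2 = ∑ i ∈ S, ((x i - m) ⬝ᵥ u) ^ 2 :=
      Finset.sum_congr rfl fun i hi => by rw [hSU i hi]
    -- least squares step
    have hSne : S.Nonempty := Finset.card_pos.mp (by omega)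
    have h7 : ∑ i ∈ S, ((x i - clusterMean x 0 S) ⬝ᵥ u) ^ 2
        ≤ ∑ i ∈ S, ((x i - m) ⬝ᵥ u) ^ 2 := by
      have hmean : ∀ i ∈ S, (x i - clusterMean x 0 S) ⬝ᵥ u
          = x i ⬝ᵥ u - (S.card : ℝ)⁻¹ * ∑ j ∈ S, x j ⬝ᵥ u := by
        intro i _
        rw [sub_dotProduct]
        congr 1
        unfold clusterMean
        rw [if_pos hSne, smul_dotProduct, sum_dot', smul_eq_mul]
      have h71 : ∑ i ∈ S, ((x i - clusterMean x 0 S) ⬝ᵥ u) ^ 2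
          = ∑ i ∈ S, (x i ⬝ᵥ u - (S.card : ℝ)⁻¹ * ∑ j ∈ S, x j ⬝ᵥ u) ^ 2 :=
        Finset.sum_congr rfl fun i hi => by rw [hmean i hi]
      have h72 : ∑ i ∈ S, ((x i - m) ⬝ᵥ u) ^ 2 = ∑ i ∈ S, (x i ⬝ᵥ u - m ⬝ᵥ u) ^ 2 :=
        Finset.sum_congr rfl fun i _ => by rw [sub_dotProduct]
      rw [h71, h72]
      exact least_squares S (fun i => x i ⬝ᵥ u) (m ⬝ᵥ u)
    have h8 : ε * (u ⬝ᵥ u) ≤ ∑ i ∈ S, ((x i - clusterMean x 0 S) ⬝ᵥ u) ^ 2 := by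
      have hS𝒮 : S ∈ 𝒮 := Finset.mem_powersetCard.mpr ⟨Finset.subset_univ _, hScard⟩
      have hεle : ε ≤ εS S := Finset.inf'_le _ hS𝒮
      have huu : 0 ≤ u ⬝ᵥ u := by
        have h1 : u ⬝ᵥ u = ∑ i, u i ^ 2 := by simp [dotProduct, sq]
        rw [h1]; exact Finset.sum_nonneg fun i _ => sq_nonneg _
      calc ε * (u ⬝ᵥ u) ≤ εS S * (u ⬝ᵥ u) := mul_le_mul_of_nonneg_right hεle huu
        _ ≤ u ⬝ᵥ (MS S *ᵥ u) := hεSquad S u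
        _ = ∑ i ∈ S, ((x i - clusterMean x 0 S) ⬝ᵥ u) ^ 2 := hquadMS S u
    linarith
  -- ################ upper bound on the determinant of W ################
  have hdetub : (pooledSSP y dflt C).det ≤ c0 := by
    -- construct the comparison configuration P
    have hUc : r ≤ U.card + (g - 1) := by omega
    set k := min r U.card with hk
    obtain ⟨A, hAsub, hAcard⟩ := Finset.exists_subset_card_eq (s := U) (n := k) (min_le_right _ _)
    have hkr : k ≤ r := min_le_left _ _
    set mm := r - k with hmm
    have hmmg : mm ≤ g - 1 := by
      rcases Nat.le_total r U.card with h | h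
      · have : k = r := min_eq_left h
        omega
      · have : k = U.card := min_eq_right h
        omega
    obtain ⟨B, hBsub, hBcard⟩ := Finset.exists_subset_card_eq (s := Finset.univ \ A) (n := mm) (by
      rw [Finset.card_sdiff, Finset.inter_univ, Finset.card_univ, Fintype.card_fin, hAcard]
      omega)
    have hval : ∀ (i : Fin n) (hb : i ∈ B), (B.equivFin ⟨i, hb⟩).val + 1 < g := by
      intro i hb
      have h1 := (B.equivFin ⟨i, hb⟩).isLt
      omega
    set ρ : Fin n → Fin g := fun i =>
      if hb : i ∈ B then ⟨(B.equivFin ⟨i, hb⟩).val + 1, hval i hb⟩ else ⟨0, hg⟩ with hρ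
    have hρ0 : ∀ i ∈ B, ρ i ≠ ⟨0, hg⟩ := by
      intro i hb
      simp only [hρ, dif_pos hb]
      intro hcontr
      have := congrArg Fin.val hcontr
      simp at this
    have hρinj : ∀ i ∈ B, ∀ i' ∈ B, ρ i = ρ i' → i = i' := by
      intro i hb i' hb' heq
      simp only [hρ, dif_pos hb, dif_pos hb'] at heq
      have hveq : (B.equivFin ⟨i, hb⟩).val = (B.equivFin ⟨i', hb'⟩).val := by
        have := congrArg Fin.val heq
        simpa using this
      have := B.equivFin.injective (Fin.ext hveq)
      exact congrArg Subtype.val this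
    set P : Fin g → Finset (Fin n) := fun j =>
      if j = ⟨0, hg⟩ then A else B.filter (fun i => ρ i = j) with hP
    have hABdisj : Disjoint A B := by
      rw [Finset.disjoint_left]
      intro a ha hb
      have := hBsub hb
      rw [Finset.mem_sdiff] at this
      exact this.2 ha
    have hPconf : IsConfig r P := by
      constructor
      · intro j j' hjj'
        rw [Finset.disjoint_left]
        intro a haj haj'
        by_cases hj : j = ⟨0, hg⟩
        · by_cases hj' : j' = ⟨0, hg⟩
          · exact hjj' (hj.trans hj'.symm)
          · rw [hP] at haj haj'
            simp only [if_pos hj, if_neg hj'] at haj haj'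
            exact Finset.disjoint_left.mp hABdisj haj (Finset.mem_filter.mp haj').1
        · by_cases hj' : j' = ⟨0, hg⟩
          · rw [hP] at haj haj'
            simp only [if_neg hj, if_pos hj'] at haj haj'
            exact Finset.disjoint_left.mp hABdisj haj' (Finset.mem_filter.mp haj).1
          · rw [hP] at haj haj'
            simp only [if_neg hj, if_neg hj'] at haj haj'
            obtain ⟨hb, hρa⟩ := Finset.mem_filter.mp haj
            obtain ⟨hb', hρa'⟩ := Finset.mem_filter.mp haj'
            exact hjj' (hρa ▸ hρa' ▸ rfl)
      · have hunion : Finset.univ.biUnion P = A ∪ B := by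
          ext a
          constructor
          · intro ha
            obtain ⟨j, _, haj⟩ := Finset.mem_biUnion.mp ha
            rw [Finset.mem_union]
            by_cases hj : j = ⟨0, hg⟩
            · rw [hP] at haj; simp only [if_pos hj] at haj; exact Or.inl haj
            · rw [hP] at haj; simp only [if_neg hj] at haj
              exact Or.inr (Finset.mem_filter.mp haj).1
          · intro ha
            rw [Finset.mem_union] at ha
            rcases ha with ha | ha
            · refine Finset.mem_biUnion.mpr ⟨⟨0, hg⟩, Finset.mem_univ _, ?_⟩
              rw [hP]; simp only [if_pos rfl]; exact ha
            · refine Finset.mem_biUnion.mpr ⟨ρ a, Finset.mem_univ _, ?_⟩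
              rw [hP]
              simp only [if_neg (hρ0 a ha)]
              exact Finset.mem_filter.mpr ⟨ha, rfl⟩
        rw [hunion, Finset.card_union_of_disjoint hABdisj, hAcard, hBcard]
        omega
    -- x-only configuration P0 with the same SSP
    set P0 : Fin g → Finset (Fin n) := fun j => if j = ⟨0, hg⟩ then A else ∅ with hP0
    have hPP0 : pooledSSP y dflt P = pooledSSP x dflt P0 := by
      unfold pooledSSP
      refine Finset.sum_congr rfl fun j _ => ?_
      by_cases hj : j = ⟨0, hg⟩
      · have hPj : P j = A := by rw [hP]; simp [if_pos hj]
        have hP0j : P0 j = A := by rw [hP0]; simp [if_pos hj]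
        rw [hPj, hP0j]
        have hyA : ∀ i ∈ A, y i = x i := by
          intro i hi
          have := hAsub hi
          rw [hU, Finset.mem_filter] at this
          exact this.2
        have hmeq : clusterMean y (dflt j) A = clusterMean x (dflt j) A :=
          clusterMean_congr _ hyA
        refine Finset.sum_congr rfl fun i hi => ?_
        rw [hyA i hi, hmeq]
      · have hPj : P j = B.filter (fun i => ρ i = j) := by rw [hP]; simp [if_neg hj]
        have hP0j : P0 j = ∅ := by rw [hP0]; simp [if_neg hj]
        rw [hPj, hP0j]
        have hcard1 : (B.filter (fun i => ρ i = j)).card ≤ 1 := by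
          rw [Finset.card_le_one]
          intro a ha b hb
          obtain ⟨hab, hae⟩ := Finset.mem_filter.mp ha
          obtain ⟨hbb, hbe⟩ := Finset.mem_filter.mp hb
          exact hρinj a hab b hbb (hae.trans hbe.symm)
        rw [cluster_small_zero y (dflt j) hcard1]
        simp
    have := hopt P hPconf
    rw [hPP0] at this
    refine this.trans ?_
    exact Finset.le_sup' (fun P : Fin g → Finset (Fin n) => (pooledSSP x dflt P).det)
      (Finset.mem_univ P0)
  -- ################ combine ################
  set W := pooledSSP y dflt C with hW
  have hWherm : W.IsHermitian := isHermitian_pooledSSP _ _ _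
  have hμ : ∀ i, ε ≤ hWherm.eigenvalues i := eig_ge hWherm hlow
  have hdetW : W.det = ∏ i, hWherm.eigenvalues i := by
    simpa using hWherm.det_eq_prod_eigenvalues
  have hpow : (0 : ℝ) < ε ^ (d - 1) := pow_pos hεpos _
  have hμub : ∀ i, hWherm.eigenvalues i ≤ c0 * (ε ^ (d - 1))⁻¹ := by
    intro i
    have hprod : ∏ j, hWherm.eigenvalues j
        = hWherm.eigenvalues i * ∏ j ∈ Finset.univ.erase i, hWherm.eigenvalues j :=
      (Finset.mul_prod_erase _ _ (Finset.mem_univ i)).symm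
    have herase : ε ^ (d - 1) ≤ ∏ j ∈ Finset.univ.erase i, hWherm.eigenvalues j := by
      have h1 : ∏ _j ∈ Finset.univ.erase i, ε ≤ ∏ j ∈ Finset.univ.erase i, hWherm.eigenvalues j :=
        Finset.prod_le_prod (fun j _ => le_of_lt hεpos) (fun j _ => hμ j)
      rwa [Finset.prod_const, Finset.card_erase_of_mem (Finset.mem_univ i),
        Finset.card_univ, Fintype.card_fin] at h1
    have hi_pos : 0 < hWherm.eigenvalues i := lt_of_lt_of_le hεpos (hμ i)
    have hchain : hWherm.eigenvalues i * ε ^ (d - 1) ≤ c0 := by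
      calc hWherm.eigenvalues i * ε ^ (d - 1)
          ≤ hWherm.eigenvalues i * ∏ j ∈ Finset.univ.erase i, hWherm.eigenvalues j :=
            mul_le_mul_of_nonneg_left herase (le_of_lt hi_pos)
        _ = W.det := by rw [hdetW, hprod]
        _ ≤ c0 := hdetub
    calc hWherm.eigenvalues i = hWherm.eigenvalues i * ε ^ (d - 1) * (ε ^ (d - 1))⁻¹ := by
          field_simp
      _ ≤ c0 * (ε ^ (d - 1))⁻¹ :=
          mul_le_mul_of_nonneg_right hchain (le_of_lt (inv_pos.mpr hpow))
  obtain ⟨w, hw1, hw2⟩ := quad_expand hWherm v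
  rw [hw1, hw2, Finset.mul_sum]
  refine Finset.sum_le_sum fun i _ => ?_
  refine mul_le_mul_of_nonneg_right ?_ (sq_nonneg _)
  exact le_trans (hμub i) (le_max_left _ _)
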